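/- Let V be an n×n real symmetric matrix with V·1 = 1, and let λ = ρ(V − 11ᵀ/n) < 1 be the spectral radius of V − 11ᵀ/n. Then for any n×M real matrix W̃, letting W = V^Γ W̃ and W̄ = (11ᵀ/n) W̃, the rows e_i of E = W − W̄ satisfy ‖e_i‖ ≤ λ^Γ · sqrt(n) · max_{j,j'} ‖w̃_j − w̃_{j'}‖ for every i, where w̃_j denotes the j-th row of W̃. -/

import Mathlib

open Matrix
open scoped RealInnerProductSpace

lemma aux_opbound {n : ℕ} {A : Matrix (Fin n) (Fin n) ℝ} (hA : A.IsHermitian) {c : ℝ}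
    (hbd : ∀ i, |hA.eigenvalues i| ≤ c) (x : Fin n → ℝ) :
    ∑ i, (A.mulVec x i)^2 ≤ c ^ 2 * ∑ i, (x i)^2 := by
  classical
  set b := hA.eigenvectorBasis with hb
  let y : EuclideanSpace ℝ (Fin n) := WithLp.toLp 2 x
  let z : EuclideanSpace ℝ (Fin n) := WithLp.toLp 2 (A.mulVec x)
  have hAsymm : Aᵀ = A := hA
  have key : ∀ j, ⟪z, b j⟫ = hA.eigenvalues j * ⟪y, b j⟫ := by
    intro j
    have h1 : ⟪z, b j⟫ = (⇑(b j)) ⬝ᵥ (A *ᵥ x) := by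
      simp [PiLp.inner_apply, dotProduct, z, mul_comm]
    have h2 : (⇑(b j)) ⬝ᵥ (A *ᵥ x) = (A *ᵥ ⇑(b j)) ⬝ᵥ x := by
      rw [dotProduct_mulVec, ← mulVec_transpose, hAsymm]
    rw [h1, h2, hA.mulVec_eigenvectorBasis]
    simp [PiLp.inner_apply, dotProduct, y, Finset.mul_sum, mul_assoc, mul_comm, mul_left_comm, hb]
  have hz : ∑ j, ⟪z, b j⟫ ^ 2 = ∑ i, (A.mulVec x i)^2 := by
    have h := b.sum_inner_mul_inner z z
    simp_rw [real_inner_comm z (b _), ← sq] at h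
    rw [h]
    simp only [z, PiLp.inner_apply, WithLp.ofLp_toLp, RCLike.inner_apply, conj_trivial, sq]
  have hy : ∑ j, ⟪y, b j⟫ ^ 2 = ∑ i, (x i)^2 := by
    have h := b.sum_inner_mul_inner y y
    simp_rw [real_inner_comm y (b _), ← sq] at h
    rw [h]
    simp only [y, PiLp.inner_apply, WithLp.ofLp_toLp, RCLike.inner_apply, conj_trivial, sq]
  calc ∑ i, (A.mulVec x i)^2 = ∑ j, ⟪z, b j⟫^2 := hz.symm
    _ = ∑ j, (hA.eigenvalues j)^2 * ⟪y, b j⟫^2 := by simp_rw [key, mul_pow]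
    _ ≤ ∑ j, c^2 * ⟪y, b j⟫^2 := by
        apply Finset.sum_le_sum; intro j _
        apply mul_le_mul_of_nonneg_right _ (sq_nonneg _)
        calc (hA.eigenvalues j)^2 = |hA.eigenvalues j|^2 := (sq_abs _).symm
          _ ≤ c^2 := by exact pow_le_pow_left₀ (abs_nonneg _) (hbd j) 2
    _ = c^2 * ∑ i, (x i)^2 := by rw [← Finset.mul_sum, hy]

lemma aux_powbound {n : ℕ} {A : Matrix (Fin n) (Fin n) ℝ} (hA : A.IsHermitian) {c : ℝ}
    (hbd : ∀ i, |hA.eigenvalues i| ≤ c) (x : Fin n → ℝ) (k : ℕ) :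
    ∑ i, ((A ^ k).mulVec x i)^2 ≤ (c ^ 2) ^ k * ∑ i, (x i)^2 := by
  induction k with
  | zero => simp
  | succ k ih =>
      have h1 : (A ^ (k+1)).mulVec x = A.mulVec ((A ^ k).mulVec x) := by
        rw [mulVec_mulVec, ← pow_succ']
      rw [h1]
      calc ∑ i, (A.mulVec ((A ^ k).mulVec x) i)^2
          ≤ c ^ 2 * ∑ i, ((A ^ k).mulVec x i)^2 := aux_opbound hA hbd _
        _ ≤ c ^ 2 * ((c ^ 2) ^ k * ∑ i, (x i)^2) :=
            mul_le_mul_of_nonneg_left ih (sq_nonneg c)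
        _ = (c ^ 2) ^ (k+1) * ∑ i, (x i)^2 := by ring

lemma aux_rowavg {n M : ℕ} [NeZero n] (W : Matrix (Fin n) (Fin M) ℝ) (k : Fin n) (D : ℝ)
    (hD : ∀ l, Real.sqrt (∑ m, (W k m - W l m)^2) ≤ D) :
    ∑ j, (W k j - (n:ℝ)⁻¹ * ∑ l, W l j)^2 ≤ D^2 := by
  have hn : (n:ℝ) ≠ 0 := Nat.cast_ne_zero.mpr (NeZero.ne n)
  set r : Fin n → EuclideanSpace ℝ (Fin M) := fun a => WithLp.toLp 2 (fun j => W a j) with hr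
  set x : EuclideanSpace ℝ (Fin M) := (n:ℝ)⁻¹ • ∑ l, (r k - r l) with hx
  have hsub : ∀ l j, (r k - r l) j = W k j - W l j := fun l j => rfl
  have hsum : ∀ j, (∑ l, (r k - r l)) j = ∑ l, (W k j - W l j) := by
    intro j
    have h0 : (∑ l, (r k - r l)) j = ∑ l, (r k - r l) j :=
      by rw [WithLp.ofLp_sum, Finset.sum_apply]
    rw [h0]
    exact Finset.sum_congr rfl fun l _ => hsub l j
  have hxj : ∀ j, x j = W k j - (n:ℝ)⁻¹ * ∑ l, W l j := by
    intro j
    have h1 : x j = (n:ℝ)⁻¹ * (∑ l, (r k - r l)) j := rfl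
    rw [h1, hsum j, Finset.sum_sub_distrib, Finset.sum_const, Finset.card_univ,
      Fintype.card_fin, nsmul_eq_mul]
    field_simp
  have hnorm : ∀ (y : EuclideanSpace ℝ (Fin M)), ‖y‖ = Real.sqrt (∑ j, (y j)^2) := by
    intro y; rw [EuclideanSpace.norm_eq]; simp [sq_abs]
  have hxD : ‖x‖ ≤ D := by
    calc ‖x‖ ≤ |(n:ℝ)⁻¹| * ‖∑ l, (r k - r l)‖ := by rw [hx, norm_smul, Real.norm_eq_abs]
      _ ≤ (n:ℝ)⁻¹ * ∑ l, ‖r k - r l‖ := by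
          rw [abs_of_nonneg (by positivity)]
          exact mul_le_mul_of_nonneg_left (norm_sum_le _ _) (by positivity)
      _ ≤ (n:ℝ)⁻¹ * ∑ _l : Fin n, D := by
          refine mul_le_mul_of_nonneg_left (Finset.sum_le_sum fun l _ => ?_) (by positivity)
          rw [hnorm]
          simp_rw [hsub l]
          exact hD l
      _ = D := by
          rw [Finset.sum_const, Finset.card_univ, Fintype.card_fin, nsmul_eq_mul]
          field_simp
  calc ∑ j, (W k j - (n:ℝ)⁻¹ * ∑ l, W l j)^2 = ∑ j, (x j)^2 := by simp_rw [hxj]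
    _ = ‖x‖^2 := by rw [hnorm, Real.sq_sqrt (by positivity)]
    _ ≤ D^2 := pow_le_pow_left₀ (norm_nonneg _) hxD 2

/-- Consensus error bound: for a symmetric consensus matrix `V` with `V 1 = 1` and spectral
radius `λ` of `V − 11ᵀ/n` smaller than `1`, after `Γ` rounds each row `e_i` of
`E = V^Γ W̃ − W̄` is bounded by `λ^Γ √n max_{j,j'} ‖w̃_j − w̃_{j'}‖`. -/
theorem stmt_4 (n M Γ : ℕ) [NeZero n] (hΓ : 1 ≤ Γ)
    (V : Matrix (Fin n) (Fin n) ℝ) (hsym : V.IsSymm)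
    (hstoch : V.mulVec (fun _ => (1 : ℝ)) = fun _ => (1 : ℝ))
    (hA : (V - (n : ℝ)⁻¹ • Matrix.of (fun _ _ => (1 : ℝ))).IsHermitian)
    (lam : ℝ)
    (hlam : lam = Finset.univ.sup' Finset.univ_nonempty (fun i => |hA.eigenvalues i|))
    (hlt : lam < 1)
    (Wt : Matrix (Fin n) (Fin M) ℝ) :
    ∀ i, Real.sqrt (∑ j, (((V ^ Γ * Wt - (n : ℝ)⁻¹ • Matrix.of (fun (_ : Fin n) (j : Fin M) => ∑ k, Wt k j) : Matrix (Fin n) (Fin M) ℝ)) i j) ^ 2)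
      ≤ lam ^ Γ * Real.sqrt n *
        Finset.univ.sup' Finset.univ_nonempty
          (fun p : Fin n × Fin n => Real.sqrt (∑ m, (Wt p.1 m - Wt p.2 m) ^ 2)) := by
  classical
  intro i
  have hbd : ∀ k, |hA.eigenvalues k| ≤ lam := by
    intro k; rw [hlam]
    exact Finset.le_sup' (fun i => |hA.eigenvalues i|) (Finset.mem_univ k)
  have hlam0 : 0 ≤ lam := le_trans (abs_nonneg _) (hbd i)
  set J : Matrix (Fin n) (Fin n) ℝ := (n:ℝ)⁻¹ • Matrix.of (fun _ _ => (1:ℝ)) with hJ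
  have hn : (n:ℝ) ≠ 0 := Nat.cast_ne_zero.mpr (NeZero.ne n)
  have hrow : ∀ i, ∑ k, V i k = 1 := by
    intro i; have := congrFun hstoch i
    simpa [mulVec, dotProduct] using this
  have hcol : ∀ j, ∑ k, V k j = 1 := by
    intro j; rw [← hrow j]
    exact Finset.sum_congr rfl (fun k _ => hsym.apply j k)
  have hAJ : (V - J) * J = 0 := by
    ext i j
    simp only [hJ, Matrix.mul_apply, Matrix.sub_apply, Matrix.smul_apply, Matrix.of_apply,
      Matrix.zero_apply, smul_eq_mul, mul_one, sub_mul, Finset.sum_sub_distrib,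
      ← Finset.sum_mul, hrow, Finset.sum_const, Finset.card_univ, Fintype.card_fin,
      nsmul_eq_mul]
    field_simp
    ring
  have hJA : J * (V - J) = 0 := by
    ext i j
    simp only [hJ, Matrix.mul_apply, Matrix.sub_apply, Matrix.smul_apply, Matrix.of_apply,
      Matrix.zero_apply, smul_eq_mul, mul_one, mul_sub, Finset.sum_sub_distrib,
      ← Finset.mul_sum, hcol, Finset.sum_const, Finset.card_univ, Fintype.card_fin,
      nsmul_eq_mul]
    field_simp
    ring
  have hJJ : J * J = J := by
    ext i j
    simp only [hJ, Matrix.mul_apply, Matrix.smul_apply, Matrix.of_apply, smul_eq_mul, mul_one,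
      Finset.sum_const, Finset.card_univ, Fintype.card_fin, nsmul_eq_mul]
    field_simp
  have hpow : ∀ k, 1 ≤ k → V ^ k = (V - J) ^ k + J := by
    intro k hk
    induction k with
    | zero => omega
    | succ k ih =>
        rcases Nat.eq_or_lt_of_le hk with h | h
        · simp [← h]
        · have hk1 : 1 ≤ k := by omega
          have hVk := ih hk1
          have hJA' : J * (V - J) ^ k = 0 := by
            obtain ⟨m, rfl⟩ := Nat.exists_eq_add_of_le hk1
            rw [add_comm, pow_succ', ← mul_assoc, hJA, zero_mul]
          calc V ^ (k+1) = V * V ^ k := by rw [pow_succ']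
            _ = ((V - J) + J) * ((V - J) ^ k + J) := by rw [hVk, sub_add_cancel]
            _ = (V - J) ^ (k+1) + (V - J) * J + (J * (V - J) ^ k + J * J) := by
                rw [sub_add_cancel, pow_succ']
                noncomm_ring
            _ = (V - J) ^ (k+1) + J := by rw [hAJ, hJA', hJJ]; simp
  -- E = (V-J)^Γ * X with X = Wt - J * Wt
  set X : Matrix (Fin n) (Fin M) ℝ := Wt - J * Wt with hX
  have hbar : (n : ℝ)⁻¹ • Matrix.of (fun (_ : Fin n) (j : Fin M) => ∑ k, Wt k j) = J * Wt := by
    ext a b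
    simp [hJ, Matrix.mul_apply, Finset.mul_sum]
  have hAJ' : (V - J) ^ Γ * J = 0 := by
    obtain ⟨m, rfl⟩ := Nat.exists_eq_add_of_le hΓ
    rw [add_comm, pow_succ, mul_assoc, hAJ, mul_zero]
  have hE : V ^ Γ * Wt - (n : ℝ)⁻¹ • Matrix.of (fun (_ : Fin n) (j : Fin M) => ∑ k, Wt k j)
      = (V - J) ^ Γ * X := by
    rw [hbar, hpow Γ hΓ, hX, Matrix.mul_sub, ← Matrix.mul_assoc, hAJ', Matrix.zero_mul,
      sub_zero, Matrix.add_mul, add_sub_cancel_right]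
  rw [hE]
  -- set up D
  set D : ℝ := Finset.univ.sup' Finset.univ_nonempty
      (fun p : Fin n × Fin n => Real.sqrt (∑ m, (Wt p.1 m - Wt p.2 m) ^ 2)) with hD
  have hD0 : 0 ≤ D := le_trans (Real.sqrt_nonneg _)
    (Finset.le_sup' (fun p : Fin n × Fin n => Real.sqrt (∑ m, (Wt p.1 m - Wt p.2 m) ^ 2))
      (Finset.mem_univ (i, i)))
  -- row bound on X
  have hXentry : ∀ k j, X k j = Wt k j - (n:ℝ)⁻¹ * ∑ l, Wt l j := by
    intro k j
    simp [hX, hJ, Matrix.mul_apply, Finset.mul_sum, Matrix.sub_apply]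
  have hXrow : ∀ k, ∑ j, (X k j)^2 ≤ D^2 := by
    intro k
    simp_rw [hXentry k]
    refine aux_rowavg Wt k D fun l => ?_
    rw [hD]
    exact Finset.le_sup' (fun p : Fin n × Fin n => Real.sqrt (∑ m, (Wt p.1 m - Wt p.2 m) ^ 2))
      (Finset.mem_univ ((k, l) : Fin n × Fin n))
  -- column bound
  have hcolbd : ∀ j, ∑ i', (((V - J) ^ Γ * X) i' j)^2 ≤ (lam^2)^Γ * ∑ k, (X k j)^2 := by
    intro j
    have hrepr : ∀ i', ((V - J) ^ Γ * X) i' j = ((V - J) ^ Γ).mulVec (fun k => X k j) i' := by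
      intro i'
      simp [Matrix.mul_apply, mulVec, dotProduct]
    simp_rw [hrepr]
    exact aux_powbound hA hbd _ Γ
  -- assemble
  have hS : ∑ j, (((V - J) ^ Γ * X) i j)^2 ≤ (lam^2)^Γ * ((n:ℝ) * D^2) := by
    calc ∑ j, (((V - J) ^ Γ * X) i j)^2
        ≤ ∑ i', ∑ j, (((V - J) ^ Γ * X) i' j)^2 :=
          Finset.single_le_sum (f := fun i' => ∑ j, (((V - J) ^ Γ * X) i' j)^2)
            (fun i' _ => Finset.sum_nonneg (fun j _ => sq_nonneg _)) (Finset.mem_univ i)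
      _ = ∑ j, ∑ i', (((V - J) ^ Γ * X) i' j)^2 := Finset.sum_comm
      _ ≤ ∑ j, (lam^2)^Γ * ∑ k, (X k j)^2 := Finset.sum_le_sum (fun j _ => hcolbd j)
      _ = (lam^2)^Γ * ∑ k, ∑ j, (X k j)^2 := by
          rw [← Finset.mul_sum]
          congr 1
          exact Finset.sum_comm
      _ ≤ (lam^2)^Γ * ∑ _k : Fin n, D^2 :=
          mul_le_mul_of_nonneg_left (Finset.sum_le_sum (fun k _ => hXrow k)) (by positivity)
      _ = (lam^2)^Γ * ((n:ℝ) * D^2) := by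
          rw [Finset.sum_const, Finset.card_univ, Fintype.card_fin, nsmul_eq_mul]
  have hRHS0 : 0 ≤ lam ^ Γ * Real.sqrt n * D := by positivity
  have hRHS2 : (lam ^ Γ * Real.sqrt n * D)^2 = (lam^2)^Γ * ((n:ℝ) * D^2) := by
    rw [mul_pow, mul_pow, Real.sq_sqrt (Nat.cast_nonneg n), ← pow_mul, ← pow_mul, Nat.mul_comm]
    ring
  calc Real.sqrt (∑ j, (((V - J) ^ Γ * X) i j)^2)
      ≤ Real.sqrt ((lam ^ Γ * Real.sqrt n * D)^2) := Real.sqrt_le_sqrt (hRHS2 ▸ hS)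
    _ = lam ^ Γ * Real.sqrt n * D := Real.sqrt_sq hRHS0
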